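/- Any permutation placement problem on a complete graph with at least 4 vertices admits a feasible swap-free schedule of makespan at most 2: for any two injective functions s, t from a finite agent set A to the vertex set V of a complete graph with |V| ≥ 4, there exists an injective function s' : A → V such that (i) for no pair of distinct agents a, b do we have s'(a) = s(b) and s'(b) = s(a), and (ii) for no pair of distinct agents a, b do we have t(a) = s'(b) and t(b) = s'(a). -/

import Mathlib

set_option linter.unusedSectionVars false

open Equiv Finset

namespace CliqueTwoStep

variable {V : Type*} [DecidableEq V] [Fintype V]

/-- A permutation with no 2-cycles. -/
def TCF (f : Equiv.Perm V) : Prop := ∀ x, f (f x) = x → f x = x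

lemma tcf_one : TCF (1 : Equiv.Perm V) := fun _ _ => rfl

lemma tcf_mul_of_disjoint {σ τ : Equiv.Perm V} (h : ∀ z, σ z = z ∨ τ z = z)
    (hσ : TCF σ) (hτ : TCF τ) : TCF (σ * τ) := by
  intro x hx
  simp only [Equiv.Perm.mul_apply] at hx ⊢
  rcases h x with hsx | htx
  · -- σ x = x
    rcases eq_or_ne (τ x) x with h0 | h0
    · rw [h0, hsx]
    · -- τ x ≠ x; then σ (τ x) = τ x by disjointness
      have h1 : σ (τ x) = τ x := by
        rcases h (τ x) with h1 | h1
        · exact h1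
        · exact absurd (τ.injective h1) h0
      rw [h1] at hx ⊢
      -- σ (τ (τ x)) = x = σ⁻¹?? use: σ x = x so x = σ x, injective
      have h2 : σ (τ (τ x)) = σ x := by rw [hx, hsx]
      have h3 : τ (τ x) = x := σ.injective h2
      exact hτ x h3
  · -- τ x = x
    rw [htx] at hx ⊢
    rcases eq_or_ne (σ x) x with h0 | h0
    · exact h0
    · have h1 : τ (σ x) = σ x := by
        rcases h (σ x) with h1 | h1
        · exact absurd (σ.injective h1) h0
        · exact h1
      rw [h1] at hx
      exact hσ x hx

/-- The set of points lying on a 2-cycle of `π`. -/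
def Bset (π : Equiv.Perm V) : Finset V :=
  Finset.univ.filter (fun x => π x ≠ x ∧ π (π x) = x)

lemma mem_Bset {π : Equiv.Perm V} {x : V} :
    x ∈ Bset π ↔ π x ≠ x ∧ π (π x) = x := by simp [Bset]

lemma apply_mem_Bset {π : Equiv.Perm V} {x : V} (h : x ∈ Bset π) : π x ∈ Bset π := by
  rw [mem_Bset] at h ⊢
  refine ⟨by rw [h.2]; exact fun e => h.1 e.symm, by rw [h.2]⟩

lemma Bset_swap (π : Equiv.Perm V) (x : V) (hx : x ∈ Bset π) :
    Bset (π * Equiv.swap x (π x)) = Bset π \ {x, π x} := by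
  obtain ⟨h1, h2⟩ := mem_Bset.mp hx
  ext z
  simp only [mem_Bset, Finset.mem_sdiff, Finset.mem_insert, Finset.mem_singleton,
    Equiv.Perm.mul_apply]
  by_cases hzx : z = x
  · subst hzx
    simp [Equiv.swap_apply_left, h2]
  by_cases hzy : z = π x
  · subst hzy
    simp [Equiv.swap_apply_right, h1]
  · have hs : Equiv.swap x (π x) z = z := Equiv.swap_apply_of_ne_of_ne hzx hzy
    rw [hs]
    have hπz1 : π z ≠ x := fun e => hzy (π.injective (by rw [e, h2]))
    have hπz2 : π z ≠ π x := fun e => hzx (π.injective e)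
    rw [Equiv.swap_apply_of_ne_of_ne hπz1 hπz2]
    constructor
    · rintro ⟨ha, hb⟩
      exact ⟨⟨ha, hb⟩, by push_neg; exact ⟨hzx, hzy⟩⟩
    · rintro ⟨⟨ha, hb⟩, _⟩
      exact ⟨ha, hb⟩

lemma even_card_Bset (π : Equiv.Perm V) : Even (Bset π).card := by
  generalize hn : (Bset π).card = n
  induction n using Nat.strong_induction_on generalizing π with
  | _ n ih =>
    rcases Nat.eq_zero_or_pos n with h0 | hpos
    · simp [h0]
    · have hne : (Bset π).Nonempty := by
        rw [← Finset.card_pos, hn]; exact hpos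
      obtain ⟨x, hx⟩ := hne
      have hy := apply_mem_Bset hx
      have hxy : x ≠ π x := fun e => (mem_Bset.mp hx).1 e.symm
      have hsub : {x, π x} ⊆ Bset π := by
        intro z hz
        rcases Finset.mem_insert.mp hz with rfl | hz
        · exact hx
        · rwa [Finset.mem_singleton.mp hz]
      have hcard2 : ({x, π x} : Finset V).card = 2 := Finset.card_pair hxy
      have hkey := Bset_swap π x hx
      have hlt : (Bset (π * Equiv.swap x (π x))).card < n := by
        rw [hkey, Finset.card_sdiff_of_subset hsub, hcard2, hn]
        omega
      have := ih _ hlt (π * Equiv.swap x (π x)) rfl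
      have hc : (Bset (π * Equiv.swap x (π x))).card = n - 2 := by
        rw [hkey, Finset.card_sdiff_of_subset hsub, hcard2, hn]
      rw [hc] at this
      have h2 : 2 ≤ n := by
        rw [← hn, ← hcard2]
        exact Finset.card_le_card hsub
      obtain ⟨k, hk⟩ := this
      exact ⟨k + 1, by omega⟩

/-! ### Explicit small cycles -/

/-- The 4-cycle `a → b → c → d → a`. -/
def cyc4 (a b c d : V) : Equiv.Perm V := Equiv.swap a d * Equiv.swap a c * Equiv.swap a b

/-- The 6-cycle `a → b → c → d → e → f → a`. -/
def cyc6 (a b c d e f : V) : Equiv.Perm V :=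
  Equiv.swap a f * Equiv.swap a e * Equiv.swap a d * Equiv.swap a c * Equiv.swap a b

section cyc4
variable {a b c d : V} (hab : a ≠ b) (hac : a ≠ c) (had : a ≠ d)
  (hbc : b ≠ c) (hbd : b ≠ d) (hcd : c ≠ d)

include hab hac had hbc hbd hcd

lemma cyc4_a : cyc4 a b c d a = b := by
  simp only [cyc4, Equiv.Perm.mul_apply, Equiv.swap_apply_left]
  rw [Equiv.swap_apply_of_ne_of_ne (Ne.symm hab) hbc,
    Equiv.swap_apply_of_ne_of_ne (Ne.symm hab) hbd]

lemma cyc4_b : cyc4 a b c d b = c := by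
  simp only [cyc4, Equiv.Perm.mul_apply]
  rw [Equiv.swap_apply_right, Equiv.swap_apply_left,
    Equiv.swap_apply_of_ne_of_ne (Ne.symm hac) hcd]

lemma cyc4_c : cyc4 a b c d c = d := by
  simp only [cyc4, Equiv.Perm.mul_apply]
  rw [Equiv.swap_apply_of_ne_of_ne (Ne.symm hac) (Ne.symm hbc),
    Equiv.swap_apply_right, Equiv.swap_apply_left]

lemma cyc4_d : cyc4 a b c d d = a := by
  simp only [cyc4, Equiv.Perm.mul_apply]
  rw [Equiv.swap_apply_of_ne_of_ne (Ne.symm had) (Ne.symm hbd),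
    Equiv.swap_apply_of_ne_of_ne (Ne.symm had) (Ne.symm hcd),
    Equiv.swap_apply_right]

omit hab hac had hbc hbd hcd

lemma cyc4_other {z : V} (hza : z ≠ a) (hzb : z ≠ b) (hzc : z ≠ c) (hzd : z ≠ d) :
    cyc4 a b c d z = z := by
  simp only [cyc4, Equiv.Perm.mul_apply]
  rw [Equiv.swap_apply_of_ne_of_ne hza hzb, Equiv.swap_apply_of_ne_of_ne hza hzc,
    Equiv.swap_apply_of_ne_of_ne hza hzd]

include hab hac had hbc hbd hcd

lemma tcf_cyc4 : TCF (cyc4 a b c d) := by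
  intro z hz
  by_cases hza : z = a
  · subst hza
    rw [cyc4_a hab hac had hbc hbd hcd, cyc4_b hab hac had hbc hbd hcd] at hz
    exact absurd hz.symm hac
  by_cases hzb : z = b
  · subst hzb
    rw [cyc4_b hab hac had hbc hbd hcd, cyc4_c hab hac had hbc hbd hcd] at hz
    exact absurd hz.symm hbd
  by_cases hzc : z = c
  · subst hzc
    rw [cyc4_c hab hac had hbc hbd hcd, cyc4_d hab hac had hbc hbd hcd] at hz
    exact absurd hz hac
  by_cases hzd : z = d
  · subst hzd
    rw [cyc4_d hab hac had hbc hbd hcd, cyc4_a hab hac had hbc hbd hcd] at hz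
    exact absurd hz hbd
  · exact cyc4_other hza hzb hzc hzd

lemma cyc4_sq : cyc4 a b c d * cyc4 a b c d = Equiv.swap b d * Equiv.swap a c := by
  ext z
  simp only [Equiv.Perm.mul_apply]
  by_cases hza : z = a
  · subst hza
    rw [cyc4_a hab hac had hbc hbd hcd, cyc4_b hab hac had hbc hbd hcd,
      Equiv.swap_apply_left, Equiv.swap_apply_of_ne_of_ne hbc.symm hcd]
  by_cases hzb : z = b
  · subst hzb
    rw [cyc4_b hab hac had hbc hbd hcd, cyc4_c hab hac had hbc hbd hcd,
      Equiv.swap_apply_of_ne_of_ne hab.symm hbc, Equiv.swap_apply_left]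
  by_cases hzc : z = c
  · subst hzc
    rw [cyc4_c hab hac had hbc hbd hcd, cyc4_d hab hac had hbc hbd hcd,
      Equiv.swap_apply_right, Equiv.swap_apply_of_ne_of_ne hab had]
  by_cases hzd : z = d
  · subst hzd
    rw [cyc4_d hab hac had hbc hbd hcd, cyc4_a hab hac had hbc hbd hcd,
      Equiv.swap_apply_of_ne_of_ne had.symm hcd.symm, Equiv.swap_apply_right]
  · rw [cyc4_other hza hzb hzc hzd, cyc4_other hza hzb hzc hzd,
      Equiv.swap_apply_of_ne_of_ne hza hzc, Equiv.swap_apply_of_ne_of_ne hzb hzd]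

end cyc4

section cyc6
variable {a b c d e f : V} (hab : a ≠ b) (hac : a ≠ c) (had : a ≠ d) (hae : a ≠ e)
  (haf : a ≠ f) (hbc : b ≠ c) (hbd : b ≠ d) (hbe : b ≠ e) (hbf : b ≠ f)
  (hcd : c ≠ d) (hce : c ≠ e) (hcf : c ≠ f) (hde : d ≠ e) (hdf : d ≠ f) (hef : e ≠ f)

include hab hac had hae haf hbc hbd hbe hbf hcd hce hcf hde hdf hef

lemma cyc6_a : cyc6 a b c d e f a = b := by
  simp only [cyc6, Equiv.Perm.mul_apply, Equiv.swap_apply_left]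
  rw [Equiv.swap_apply_of_ne_of_ne (Ne.symm hab) hbc,
    Equiv.swap_apply_of_ne_of_ne (Ne.symm hab) hbd,
    Equiv.swap_apply_of_ne_of_ne (Ne.symm hab) hbe,
    Equiv.swap_apply_of_ne_of_ne (Ne.symm hab) hbf]

lemma cyc6_b : cyc6 a b c d e f b = c := by
  simp only [cyc6, Equiv.Perm.mul_apply]
  rw [Equiv.swap_apply_right, Equiv.swap_apply_left,
    Equiv.swap_apply_of_ne_of_ne (Ne.symm hac) hcd,
    Equiv.swap_apply_of_ne_of_ne (Ne.symm hac) hce,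
    Equiv.swap_apply_of_ne_of_ne (Ne.symm hac) hcf]

lemma cyc6_c : cyc6 a b c d e f c = d := by
  simp only [cyc6, Equiv.Perm.mul_apply]
  rw [Equiv.swap_apply_of_ne_of_ne (Ne.symm hac) (Ne.symm hbc),
    Equiv.swap_apply_right, Equiv.swap_apply_left,
    Equiv.swap_apply_of_ne_of_ne (Ne.symm had) hde,
    Equiv.swap_apply_of_ne_of_ne (Ne.symm had) hdf]

lemma cyc6_d : cyc6 a b c d e f d = e := by
  simp only [cyc6, Equiv.Perm.mul_apply]
  rw [Equiv.swap_apply_of_ne_of_ne (Ne.symm had) (Ne.symm hbd),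
    Equiv.swap_apply_of_ne_of_ne (Ne.symm had) (Ne.symm hcd),
    Equiv.swap_apply_right, Equiv.swap_apply_left,
    Equiv.swap_apply_of_ne_of_ne (Ne.symm hae) hef]

lemma cyc6_e : cyc6 a b c d e f e = f := by
  simp only [cyc6, Equiv.Perm.mul_apply]
  rw [Equiv.swap_apply_of_ne_of_ne (Ne.symm hae) (Ne.symm hbe),
    Equiv.swap_apply_of_ne_of_ne (Ne.symm hae) (Ne.symm hce),
    Equiv.swap_apply_of_ne_of_ne (Ne.symm hae) (Ne.symm hde),
    Equiv.swap_apply_right, Equiv.swap_apply_left]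

lemma cyc6_f : cyc6 a b c d e f f = a := by
  simp only [cyc6, Equiv.Perm.mul_apply]
  rw [Equiv.swap_apply_of_ne_of_ne (Ne.symm haf) (Ne.symm hbf),
    Equiv.swap_apply_of_ne_of_ne (Ne.symm haf) (Ne.symm hcf),
    Equiv.swap_apply_of_ne_of_ne (Ne.symm haf) (Ne.symm hdf),
    Equiv.swap_apply_of_ne_of_ne (Ne.symm haf) (Ne.symm hef),
    Equiv.swap_apply_right]

omit hab hac had hae haf hbc hbd hbe hbf hcd hce hcf hde hdf hef

lemma cyc6_other {z : V} (hza : z ≠ a) (hzb : z ≠ b) (hzc : z ≠ c) (hzd : z ≠ d)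
    (hze : z ≠ e) (hzf : z ≠ f) : cyc6 a b c d e f z = z := by
  simp only [cyc6, Equiv.Perm.mul_apply]
  rw [Equiv.swap_apply_of_ne_of_ne hza hzb, Equiv.swap_apply_of_ne_of_ne hza hzc,
    Equiv.swap_apply_of_ne_of_ne hza hzd, Equiv.swap_apply_of_ne_of_ne hza hze,
    Equiv.swap_apply_of_ne_of_ne hza hzf]

include hab hac had hae haf hbc hbd hbe hbf hcd hce hcf hde hdf hef

lemma tcf_cyc6 : TCF (cyc6 a b c d e f) := by
  have h1 := cyc6_a hab hac had hae haf hbc hbd hbe hbf hcd hce hcf hde hdf hef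
  have h2 := cyc6_b hab hac had hae haf hbc hbd hbe hbf hcd hce hcf hde hdf hef
  have h3 := cyc6_c hab hac had hae haf hbc hbd hbe hbf hcd hce hcf hde hdf hef
  have h4 := cyc6_d hab hac had hae haf hbc hbd hbe hbf hcd hce hcf hde hdf hef
  have h5 := cyc6_e hab hac had hae haf hbc hbd hbe hbf hcd hce hcf hde hdf hef
  have h6 := cyc6_f hab hac had hae haf hbc hbd hbe hbf hcd hce hcf hde hdf hef
  intro z hz
  by_cases hza : z = a
  · subst hza; rw [h1, h2] at hz; exact absurd hz.symm hac
  by_cases hzb : z = b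
  · subst hzb; rw [h2, h3] at hz; exact absurd hz.symm hbd
  by_cases hzc : z = c
  · subst hzc; rw [h3, h4] at hz; exact absurd hz.symm hce
  by_cases hzd : z = d
  · subst hzd; rw [h4, h5] at hz; exact absurd hz.symm hdf
  by_cases hze : z = e
  · subst hze; rw [h5, h6] at hz; exact absurd hz hae
  by_cases hzf : z = f
  · subst hzf; rw [h6, h1] at hz; exact absurd hz hbf
  · exact cyc6_other hza hzb hzc hzd hze hzf

end cyc6

/-! ### Surgery lemmas -/

lemma inv_apply_eq {σ : Equiv.Perm V} {p q : V} (h : σ q = p) : σ⁻¹ p = q := by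
  rw [← h]; exact σ.symm_apply_apply q

lemma surgery4 (ρ : Equiv.Perm V) (x y u : V)
    (hx : ρ x = y) (hy : ρ y = x) (hxy : x ≠ y)
    (hux : u ≠ x) (huy : u ≠ y)
    (h1 : ρ u ≠ u) (h2 : ρ (ρ u) ≠ u) (h3 : ρ (ρ u) ≠ ρ u)
    (hexc : ∀ z, z ≠ x → z ≠ y → ρ (ρ z) = z → ρ z = z) :
    TCF ((cyc4 x u y (ρ u))⁻¹ * ρ) := by
  set w := ρ u with hw
  set lam := cyc4 x u y w with hlam
  -- distinctness
  have hxu : x ≠ u := hux.symm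
  have hxw : x ≠ w := fun h => huy (ρ.injective (by rw [hy, h] : ρ y = ρ u)).symm
  have huw : u ≠ w := fun h => h1 h.symm
  have hyw : y ≠ w := fun h => hux (ρ.injective (by rw [hx, h] : ρ x = ρ u)).symm
  -- lambda values
  have lx : lam x = u := cyc4_a hxu hxy hxw huy huw hyw
  have lu : lam u = y := cyc4_b hxu hxy hxw huy huw hyw
  have ly : lam y = w := cyc4_c hxu hxy hxw huy huw hyw
  have lw : lam w = x := cyc4_d hxu hxy hxw huy huw hyw
  -- rho-of-w facts
  have hwx2 : ρ w ≠ x := fun h => hyw.symm (ρ.injective (by rw [hy, h] : ρ y = ρ w)).symm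
  have hwy2 : ρ w ≠ y := fun h => hxw (ρ.injective (by rw [hx, h] : ρ x = ρ w))
  -- mu values
  have μx : (lam⁻¹ * ρ) x = u := by
    simp only [Equiv.Perm.mul_apply, hx]; exact inv_apply_eq lu
  have μu : (lam⁻¹ * ρ) u = y := by
    simp only [Equiv.Perm.mul_apply, ← hw]; exact inv_apply_eq ly
  have μy : (lam⁻¹ * ρ) y = w := by
    simp only [Equiv.Perm.mul_apply, hy]; exact inv_apply_eq lw
  have μw : (lam⁻¹ * ρ) w = ρ w := by
    simp only [Equiv.Perm.mul_apply]
    exact inv_apply_eq (cyc4_other hwx2 h2 hwy2 h3)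
  intro z hz
  by_cases hzx : z = x
  · subst hzx; rw [μx, μu] at hz; exact absurd hz.symm hxy
  by_cases hzu : z = u
  · subst hzu; rw [μu, μy] at hz; exact absurd hz.symm huw
  by_cases hzy : z = y
  · subst hzy; rw [μy, μw] at hz; exact absurd hz hwy2
  by_cases hzw : z = w
  · subst hzw
    rw [μw] at hz
    have hz' : ρ (ρ w) = lam w := by
      have : lam ((lam⁻¹ * ρ) (ρ w)) = lam w := by rw [hz]
      simpa only [Equiv.Perm.mul_apply, Equiv.Perm.coe_inv, Equiv.apply_symm_apply] using this
    rw [lw] at hz'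
    exact absurd (ρ.injective (by rw [hz', hy] : ρ (ρ w) = ρ y)) hwy2
  -- z outside the 4-set
  by_cases hρz : ρ z = z
  · simp only [Equiv.Perm.mul_apply, hρz]
    exact inv_apply_eq (cyc4_other hzx hzu hzy hzw)
  · exfalso
    have hzρx : ρ z ≠ x := fun h => hzy (ρ.injective (by rw [h, hy] : ρ z = ρ y))
    have hzρy : ρ z ≠ y := fun h => hzx (ρ.injective (by rw [h, hx] : ρ z = ρ x))
    have hzρw : ρ z ≠ w := fun h => hzu (ρ.injective (h : ρ z = ρ u))
    by_cases hzρu : ρ z = u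
    · have e1 : (lam⁻¹ * ρ) z = x := by
        simp only [Equiv.Perm.mul_apply, hzρu]; exact inv_apply_eq lx
      rw [e1, μx] at hz
      exact hzu hz.symm
    · have e1 : (lam⁻¹ * ρ) z = ρ z := by
        simp only [Equiv.Perm.mul_apply]
        exact inv_apply_eq (cyc4_other hzρx hzρu hzρy hzρw)
      rw [e1] at hz
      have hz' : ρ (ρ z) = lam z := by
        have : lam ((lam⁻¹ * ρ) (ρ z)) = lam z := by rw [hz]
        simpa only [Equiv.Perm.mul_apply, Equiv.Perm.coe_inv, Equiv.apply_symm_apply] using this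
      rw [cyc4_other hzx hzu hzy hzw] at hz'
      exact hρz (hexc z hzx hzy hz')

lemma surgeryFix (ρ : Equiv.Perm V) (x y u v : V)
    (hx : ρ x = y) (hy : ρ y = x) (hxy : x ≠ y)
    (hu : ρ u = u) (hv : ρ v = v) (huv : u ≠ v)
    (hexc : ∀ z, z ≠ x → z ≠ y → ρ (ρ z) = z → ρ z = z) :
    TCF ((cyc4 x u v y)⁻¹ * ρ) := by
  set lam := cyc4 x u v y with hlam
  have hux : u ≠ x := fun h => hxy (by rw [h] at hu; rw [← hx, hu])
  have huy : u ≠ y := fun h => hxy (by rw [h] at hu; rw [← hy]; exact hu)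
  have hvx : v ≠ x := fun h => hxy (by rw [h] at hv; rw [← hx, hv])
  have hvy : v ≠ y := fun h => hxy (by rw [h] at hv; rw [← hy]; exact hv)
  have lx : lam x = u := cyc4_a hux.symm hvx.symm hxy huv huy hvy
  have lu : lam u = v := cyc4_b hux.symm hvx.symm hxy huv huy hvy
  have lv : lam v = y := cyc4_c hux.symm hvx.symm hxy huv huy hvy
  have lyy : lam y = x := cyc4_d hux.symm hvx.symm hxy huv huy hvy
  have μx : (lam⁻¹ * ρ) x = v := by
    simp only [Equiv.Perm.mul_apply, hx]; exact inv_apply_eq lv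
  have μy : (lam⁻¹ * ρ) y = y := by
    simp only [Equiv.Perm.mul_apply, hy]; exact inv_apply_eq lyy
  have μu : (lam⁻¹ * ρ) u = x := by
    simp only [Equiv.Perm.mul_apply, hu]; exact inv_apply_eq lx
  have μv : (lam⁻¹ * ρ) v = u := by
    simp only [Equiv.Perm.mul_apply, hv]; exact inv_apply_eq lu
  intro z hz
  by_cases hzx : z = x
  · subst hzx; rw [μx, μv] at hz; exact absurd hz hux
  by_cases hzu : z = u
  · subst hzu; rw [μu, μx] at hz; exact absurd hz.symm huv
  by_cases hzv : z = v
  · subst hzv; rw [μv, μu] at hz; exact absurd hz.symm hvx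
  by_cases hzy : z = y
  · subst hzy; exact μy
  by_cases hρz : ρ z = z
  · simp only [Equiv.Perm.mul_apply, hρz]
    exact inv_apply_eq (cyc4_other hzx hzu hzv hzy)
  · exfalso
    have hzρx : ρ z ≠ x := fun h => hzy (ρ.injective (by rw [h, hy] : ρ z = ρ y))
    have hzρy : ρ z ≠ y := fun h => hzx (ρ.injective (by rw [h, hx] : ρ z = ρ x))
    have hzρu : ρ z ≠ u := fun h => hzu (ρ.injective (by rw [h, hu] : ρ z = ρ u))
    have hzρv : ρ z ≠ v := fun h => hzv (ρ.injective (by rw [h, hv] : ρ z = ρ v))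
    have e1 : (lam⁻¹ * ρ) z = ρ z := by
      simp only [Equiv.Perm.mul_apply]
      exact inv_apply_eq (cyc4_other hzρx hzρu hzρv hzρy)
    rw [e1] at hz
    have hz' : ρ (ρ z) = lam z := by
      have : lam ((lam⁻¹ * ρ) (ρ z)) = lam z := by rw [hz]
      simpa only [Equiv.Perm.mul_apply, Equiv.Perm.coe_inv, Equiv.apply_symm_apply] using this
    rw [cyc4_other hzx hzu hzv hzy] at hz'
    exact hρz (hexc z hzx hzy hz')

lemma surgery6 (ρ : Equiv.Perm V) (x1 x2 x3 y1 y2 y3 : V)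
    (r1 : ρ x1 = y1) (r1' : ρ y1 = x1) (r2 : ρ x2 = y2) (r2' : ρ y2 = x2)
    (r3 : ρ x3 = y3) (r3' : ρ y3 = x3)
    (hab : x1 ≠ x2) (hac : x1 ≠ x3) (had : x1 ≠ y1) (hae : x1 ≠ y2) (haf : x1 ≠ y3)
    (hbc : x2 ≠ x3) (hbd : x2 ≠ y1) (hbe : x2 ≠ y2) (hbf : x2 ≠ y3)
    (hcd : x3 ≠ y1) (hce : x3 ≠ y2) (hcf : x3 ≠ y3)
    (hde : y1 ≠ y2) (hdf : y1 ≠ y3) (hef : y2 ≠ y3)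
    (hexc : ∀ z, z ≠ x1 → z ≠ y1 → z ≠ x2 → z ≠ y2 → z ≠ x3 → z ≠ y3 →
      ρ (ρ z) = z → ρ z = z) :
    TCF ((cyc6 x1 x2 x3 y1 y2 y3)⁻¹ * ρ) := by
  set lam := cyc6 x1 x2 x3 y1 y2 y3 with hlam
  have la : lam x1 = x2 := cyc6_a hab hac had hae haf hbc hbd hbe hbf hcd hce hcf hde hdf hef
  have lb : lam x2 = x3 := cyc6_b hab hac had hae haf hbc hbd hbe hbf hcd hce hcf hde hdf hef
  have lc : lam x3 = y1 := cyc6_c hab hac had hae haf hbc hbd hbe hbf hcd hce hcf hde hdf hef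
  have ld : lam y1 = y2 := cyc6_d hab hac had hae haf hbc hbd hbe hbf hcd hce hcf hde hdf hef
  have le : lam y2 = y3 := cyc6_e hab hac had hae haf hbc hbd hbe hbf hcd hce hcf hde hdf hef
  have lf : lam y3 = x1 := cyc6_f hab hac had hae haf hbc hbd hbe hbf hcd hce hcf hde hdf hef
  have μa : (lam⁻¹ * ρ) x1 = x3 := by
    simp only [Equiv.Perm.mul_apply, r1]; exact inv_apply_eq lc
  have μd : (lam⁻¹ * ρ) y1 = y3 := by
    simp only [Equiv.Perm.mul_apply, r1']; exact inv_apply_eq lf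
  have μb : (lam⁻¹ * ρ) x2 = y1 := by
    simp only [Equiv.Perm.mul_apply, r2]; exact inv_apply_eq ld
  have μe : (lam⁻¹ * ρ) y2 = x1 := by
    simp only [Equiv.Perm.mul_apply, r2']; exact inv_apply_eq la
  have μc : (lam⁻¹ * ρ) x3 = y2 := by
    simp only [Equiv.Perm.mul_apply, r3]; exact inv_apply_eq le
  have μf : (lam⁻¹ * ρ) y3 = x2 := by
    simp only [Equiv.Perm.mul_apply, r3']; exact inv_apply_eq lb
  intro z hz
  by_cases h1 : z = x1
  · subst h1; rw [μa, μc] at hz; exact absurd hz.symm hae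
  by_cases h2 : z = y1
  · subst h2; rw [μd, μf] at hz; exact absurd hz hbd
  by_cases h3 : z = x2
  · subst h3; rw [μb, μd] at hz; exact absurd hz.symm hbf
  by_cases h4 : z = y2
  · subst h4; rw [μe, μa] at hz; exact absurd hz hce
  by_cases h5 : z = x3
  · subst h5; rw [μc, μe] at hz; exact absurd hz hac
  by_cases h6 : z = y3
  · subst h6; rw [μf, μb] at hz; exact absurd hz hdf
  by_cases hρz : ρ z = z
  · simp only [Equiv.Perm.mul_apply, hρz]
    exact inv_apply_eq (cyc6_other h1 h3 h5 h2 h4 h6)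
  · exfalso
    have k1 : ρ z ≠ x1 := fun h => h2 (ρ.injective (by rw [h, r1'] : ρ z = ρ y1))
    have k2 : ρ z ≠ y1 := fun h => h1 (ρ.injective (by rw [h, r1] : ρ z = ρ x1))
    have k3 : ρ z ≠ x2 := fun h => h4 (ρ.injective (by rw [h, r2'] : ρ z = ρ y2))
    have k4 : ρ z ≠ y2 := fun h => h3 (ρ.injective (by rw [h, r2] : ρ z = ρ x2))
    have k5 : ρ z ≠ x3 := fun h => h6 (ρ.injective (by rw [h, r3'] : ρ z = ρ y3))
    have k6 : ρ z ≠ y3 := fun h => h5 (ρ.injective (by rw [h, r3] : ρ z = ρ x3))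
    have e1 : (lam⁻¹ * ρ) z = ρ z := by
      simp only [Equiv.Perm.mul_apply]
      exact inv_apply_eq (cyc6_other k1 k3 k5 k2 k4 k6)
    rw [e1] at hz
    have hz' : ρ (ρ z) = lam z := by
      have : lam ((lam⁻¹ * ρ) (ρ z)) = lam z := by rw [hz]
      simpa only [Equiv.Perm.mul_apply, Equiv.Perm.coe_inv, Equiv.apply_symm_apply] using this
    rw [cyc6_other h1 h3 h5 h2 h4 h6] at hz'
    exact hρz (hexc z h1 h2 h3 h4 h5 h6 hz')

/-! ### Pairing up the 2-cycles when their number is even -/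

lemma lemE : ∀ (π : Equiv.Perm V), (Bset π).card % 4 = 0 →
    ∃ σ : Equiv.Perm V, (∀ z, z ∉ Bset π → σ z = z) ∧ TCF σ ∧ TCF (σ⁻¹ * π) := by
  suffices H : ∀ (n : ℕ) (π : Equiv.Perm V), (Bset π).card = n → n % 4 = 0 →
      ∃ σ : Equiv.Perm V, (∀ z, z ∉ Bset π → σ z = z) ∧ TCF σ ∧ TCF (σ⁻¹ * π) by
    exact fun π h => H _ π rfl h
  intro n
  induction n using Nat.strong_induction_on with
  | _ n ih =>
  intro π hn h4
  rcases Nat.eq_zero_or_pos n with rfl | hpos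
  · refine ⟨1, fun z _ => rfl, tcf_one, ?_⟩
    intro z hz
    simp only [inv_one, one_mul] at hz ⊢
    by_contra hne
    have hmem : z ∈ Bset π := mem_Bset.mpr ⟨hne, hz⟩
    rw [Finset.card_eq_zero.mp hn] at hmem
    exact absurd hmem (Finset.notMem_empty z)
  -- pick the first transposition (x, y)
  obtain ⟨x, hxmem⟩ : (Bset π).Nonempty := by rw [← Finset.card_pos, hn]; exact hpos
  obtain ⟨hπx, hπ2x⟩ := mem_Bset.mp hxmem
  set y := π x with hydef
  have hymem : y ∈ Bset π := apply_mem_Bset hxmem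
  have hxy : x ≠ y := fun h => hπx h.symm
  set π1 := π * Equiv.swap x y with hπ1def
  have hB1 : Bset π1 = Bset π \ {x, y} := Bset_swap π x hxmem
  have hsubxy : ({x, y} : Finset V) ⊆ Bset π := by
    intro z hz
    rcases Finset.mem_insert.mp hz with rfl | hz
    · exact hxmem
    · rwa [Finset.mem_singleton.mp hz]
  have hn4 : 4 ≤ n := by omega
  have hcard1 : (Bset π1).card = n - 2 := by
    rw [hB1, Finset.card_sdiff_of_subset hsubxy, Finset.card_pair hxy, hn]
  -- pick the second transposition (u, v)
  obtain ⟨u, humem1⟩ : (Bset π1).Nonempty := by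
    rw [← Finset.card_pos, hcard1]; omega
  have humem : u ∈ Bset π ∧ u ≠ x ∧ u ≠ y := by
    have := humem1
    rw [hB1, Finset.mem_sdiff, Finset.mem_insert, Finset.mem_singleton] at this
    exact ⟨this.1, fun h => this.2 (Or.inl h), fun h => this.2 (Or.inr h)⟩
  obtain ⟨humem', hux, huy⟩ := humem
  obtain ⟨hπu, hπ2u⟩ := mem_Bset.mp humem'
  set v := π u with hvdef
  have huv : u ≠ v := fun h => hπu h.symm
  have hvx : v ≠ x := fun h => huy (π.injective (h.trans hπ2x.symm))
  have hvy : v ≠ y := fun h => hux (π.injective h)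
  have hπ1u : π1 u = v := by
    rw [hπ1def]
    simp only [Equiv.Perm.mul_apply, Equiv.swap_apply_of_ne_of_ne hux huy]
    rfl
  set π2 := π1 * Equiv.swap u v with hπ2def
  have hB2 : Bset π2 = Bset π1 \ {u, v} := by
    have := Bset_swap π1 u humem1
    rwa [hπ1u] at this
  have hsubuv : ({u, v} : Finset V) ⊆ Bset π1 := by
    intro z hz
    rcases Finset.mem_insert.mp hz with rfl | hz
    · exact humem1
    · rw [Finset.mem_singleton.mp hz]
      have := apply_mem_Bset humem1
      rwa [hπ1u] at this
  have hcard2 : (Bset π2).card = n - 4 := by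
    rw [hB2, Finset.card_sdiff_of_subset hsubuv, Finset.card_pair huv, hcard1]
    omega
  obtain ⟨σ', hfix', hTσ', hTμ'⟩ := ih (n - 4) (by omega) π2 hcard2 (by omega)
  -- the joining 4-cycle
  have hxu : x ≠ u := hux.symm
  have hxv : x ≠ v := hvx.symm
  have huy' : u ≠ y := huy
  have hyv : y ≠ v := hvy.symm
  set lam := cyc4 x u y v with hlamdef
  have hTlam : TCF lam := tcf_cyc4 hxu hxy hxv huy huv hyv
  have hlam_fix : ∀ z, z ≠ x → z ≠ u → z ≠ y → z ≠ v → lam z = z :=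
    fun z h1 h2 h3 h4 => cyc4_other h1 h2 h3 h4
  have hmem4 : ∀ z, z = x ∨ z = u ∨ z = y ∨ z = v → z ∉ Bset π2 := by
    intro z hz
    rw [hB2, hB1]
    simp only [Finset.mem_sdiff, Finset.mem_insert, Finset.mem_singleton]
    rintro ⟨⟨_, hz2⟩, hz3⟩
    rcases hz with rfl | rfl | rfl | rfl
    · exact hz2 (Or.inl rfl)
    · exact hz3 (Or.inl rfl)
    · exact hz2 (Or.inr rfl)
    · exact hz3 (Or.inr rfl)
  have hdisσ : ∀ z, σ' z = z ∨ lam z = z := by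
    intro z
    by_cases h1 : z = x
    · exact Or.inl (hfix' z (hmem4 z (Or.inl h1)))
    by_cases h2 : z = u
    · exact Or.inl (hfix' z (hmem4 z (Or.inr (Or.inl h2))))
    by_cases h3 : z = y
    · exact Or.inl (hfix' z (hmem4 z (Or.inr (Or.inr (Or.inl h3)))))
    by_cases h4 : z = v
    · exact Or.inl (hfix' z (hmem4 z (Or.inr (Or.inr (Or.inr h4)))))
    · exact Or.inr (hlam_fix z h1 h2 h3 h4)
  -- μ' fixes the four points
  have hπ2fix : ∀ z, z = x ∨ z = u ∨ z = y ∨ z = v → π2 z = z := by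
    intro z hz
    rw [hπ2def, hπ1def]
    simp only [Equiv.Perm.mul_apply]
    rcases hz with rfl | rfl | rfl | rfl
    · rw [Equiv.swap_apply_of_ne_of_ne hxu hxv, Equiv.swap_apply_left, hydef]
      exact hπ2x
    · rw [Equiv.swap_apply_left, Equiv.swap_apply_of_ne_of_ne hvx hvy, hvdef]
      exact hπ2u
    · rw [Equiv.swap_apply_of_ne_of_ne huy.symm hyv, Equiv.swap_apply_right]
    · rw [Equiv.swap_apply_right, Equiv.swap_apply_of_ne_of_ne hux huy]
  have hμfix : ∀ z, z = x ∨ z = u ∨ z = y ∨ z = v → (σ'⁻¹ * π2) z = z := by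
    intro z hz
    simp only [Equiv.Perm.mul_apply, hπ2fix z hz]
    exact inv_apply_eq (hfix' z (hmem4 z hz))
  have hdisμ : ∀ z, (σ'⁻¹ * π2) z = z ∨ lam z = z := by
    intro z
    by_cases h1 : z = x ∨ z = u ∨ z = y ∨ z = v
    · exact Or.inl (hμfix z h1)
    · push_neg at h1
      exact Or.inr (hlam_fix z h1.1 h1.2.1 h1.2.2.1 h1.2.2.2)
  have hππ : π = π2 * (lam * lam) := by
    rw [hlamdef, cyc4_sq hxu hxy hxv huy huv hyv, hπ2def, hπ1def]
    simp only [mul_assoc, Equiv.swap_mul_self_mul, Equiv.swap_mul_self, mul_one]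
  have hdisjperm : Equiv.Perm.Disjoint (σ'⁻¹ * π2) lam := hdisμ
  have key : (σ' * lam)⁻¹ * π = (σ'⁻¹ * π2) * lam := by
    rw [hππ, mul_inv_rev]
    calc lam⁻¹ * σ'⁻¹ * (π2 * (lam * lam))
        = lam⁻¹ * ((σ'⁻¹ * π2 * lam) * lam) := by simp only [mul_assoc]
      _ = lam⁻¹ * ((lam * (σ'⁻¹ * π2)) * lam) := by rw [hdisjperm.commute.eq]
      _ = (σ'⁻¹ * π2) * lam := by simp only [mul_assoc, inv_mul_cancel_left]
  refine ⟨σ' * lam, ?_, ?_, ?_⟩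
  · intro z hz
    have h4' : ¬(z = x ∨ z = u ∨ z = y ∨ z = v) := by
      rintro (rfl | rfl | rfl | rfl)
      · exact hz hxmem
      · exact hz humem'
      · exact hz hymem
      · exact hz (by rw [hvdef]; exact apply_mem_Bset humem')
    push_neg at h4'
    simp only [Equiv.Perm.mul_apply, hlam_fix z h4'.1 h4'.2.1 h4'.2.2.1 h4'.2.2.2]
    refine hfix' z ?_
    rw [hB2, hB1]
    simp only [Finset.mem_sdiff]
    exact fun hc => hz hc.1.1
  · exact tcf_mul_of_disjoint hdisσ hTσ' hTlam
  · rw [key]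
    exact tcf_mul_of_disjoint hdisμ hTμ' hTlam

/-- Key lemma: any permutation of a set with at least 4 elements is a product of two
permutations having no 2-cycles. -/
lemma key_perm (hV : 4 ≤ Fintype.card V) (π : Equiv.Perm V) :
    ∃ σ : Equiv.Perm V, TCF σ ∧ TCF (σ⁻¹ * π) := by
  by_cases h4 : (Bset π).card % 4 = 0
  · obtain ⟨σ, _, h1, h2⟩ := lemE π h4
    exact ⟨σ, h1, h2⟩
  have heven := even_card_Bset π
  have h2mod : (Bset π).card % 4 = 2 := by
    obtain ⟨k, hk⟩ := heven; omega
  have hpos : 0 < (Bset π).card := by omega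
  obtain ⟨x, hxmem⟩ : (Bset π).Nonempty := Finset.card_pos.mp hpos
  obtain ⟨hπx, hπ2x⟩ := mem_Bset.mp hxmem
  set y := π x with hydef
  have hymem : y ∈ Bset π := apply_mem_Bset hxmem
  have hxy : x ≠ y := fun h => hπx h.symm
  have hπy : π y = x := hπ2x
  set π1 := π * Equiv.swap x y with hπ1def
  have hB1 : Bset π1 = Bset π \ {x, y} := Bset_swap π x hxmem
  have hsubxy : ({x, y} : Finset V) ⊆ Bset π := by
    intro z hz
    rcases Finset.mem_insert.mp hz with rfl | hz
    · exact hxmem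
    · rwa [Finset.mem_singleton.mp hz]
  have hcard1 : (Bset π1).card = (Bset π).card - 2 := by
    rw [hB1, Finset.card_sdiff_of_subset hsubxy, Finset.card_pair hxy]
  have hBsub1 : Bset π1 ⊆ Bset π := by
    rw [hB1]; exact Finset.sdiff_subset
  have hxnot1 : x ∉ Bset π1 := by
    rw [hB1]; simp
  have hynot1 : y ∉ Bset π1 := by
    rw [hB1]; simp
  by_cases hcyc : ∃ u, π u ≠ u ∧ π (π u) ≠ u
  · -- case A : merge the leftover transposition with a long cycle
    obtain ⟨u, hu1, hu2⟩ := hcyc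
    have hux : u ≠ x := by rintro rfl; exact hu2 hπ2x
    have huy : u ≠ y := by
      rintro rfl
      exact hu2 (by rw [hπy, ← hydef])
    obtain ⟨σE, hfixE, hTσE, hTμ'⟩ := lemE π1 (by omega)
    have hfixE' : ∀ z, z ∉ Bset π1 → σE⁻¹ z = z := fun z h => inv_apply_eq (hfixE z h)
    set ρ := σE⁻¹ * π with hρdef
    set μ1 := σE⁻¹ * π1 with hμ1def
    have hρx : ρ x = y := by
      rw [hρdef]
      simp only [Equiv.Perm.mul_apply, ← hydef]
      exact hfixE' y hynot1
    have hρy : ρ y = x := by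
      rw [hρdef]
      simp only [Equiv.Perm.mul_apply, hπy]
      exact hfixE' x hxnot1
    have hoff : ∀ w, w ≠ x → w ≠ y → ρ w = μ1 w := by
      intro w w1 w2
      rw [hρdef, hμ1def]
      simp only [Equiv.Perm.mul_apply, hπ1def]
      rw [Equiv.swap_apply_of_ne_of_ne w1 w2]
    have hexc : ∀ z, z ≠ x → z ≠ y → ρ (ρ z) = z → ρ z = z := by
      intro z h1 h2 hzz
      rw [hoff z h1 h2] at hzz ⊢
      by_cases e1 : μ1 z = x
      · rw [e1, hρx] at hzz; exact absurd hzz.symm h2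
      by_cases e2 : μ1 z = y
      · rw [e2, hρy] at hzz; exact absurd hzz.symm h1
      · rw [hoff (μ1 z) e1 e2] at hzz
        exact hTμ' z hzz
    have hunotB : u ∉ Bset π := fun h => hu2 (mem_Bset.mp h).2
    have hwnotB : π u ∉ Bset π := fun h => hu2 (π.injective (mem_Bset.mp h).2)
    have hρu : ρ u = π u := by
      rw [hρdef]
      simp only [Equiv.Perm.mul_apply]
      exact hfixE' (π u) (fun h => hwnotB (hBsub1 h))
    have hρw : ρ (π u) = π (π u) := by
      rw [hρdef]
      simp only [Equiv.Perm.mul_apply]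
      have : π (π u) ∉ Bset π := fun h => hu2 (π.injective (π.injective (mem_Bset.mp h).2))
      exact hfixE' (π (π u)) (fun h => this (hBsub1 h))
    have hsurg : TCF ((cyc4 x u y (ρ u))⁻¹ * ρ) := by
      apply surgery4 ρ x y u hρx hρy hxy hux huy
      · rw [hρu]; exact hu1
      · rw [hρu, hρw]; exact hu2
      · rw [hρu, hρw]; exact fun h => hu1 (π.injective h)
      · exact hexc
    -- assemble
    have hxw : x ≠ π u := fun h => huy (π.injective (by rw [hπy, h] : π y = π u)).symm
    have hyw : y ≠ π u := fun h => hux (π.injective (by rw [← hydef, h] : π x = π u)).symm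
    have huw : u ≠ π u := fun h => hu1 h.symm
    refine ⟨σE * cyc4 x u y (ρ u), ?_, ?_⟩
    · apply tcf_mul_of_disjoint _ hTσE
      · rw [hρu]
        exact tcf_cyc4 hux.symm hxy hxw huy huw hyw
      · intro z
        rw [hρu]
        by_cases h1 : z = x
        · exact Or.inl (hfixE z (by rw [h1]; exact hxnot1))
        by_cases h2 : z = u
        · exact Or.inl (hfixE z (by rw [h2]; exact fun h => hunotB (hBsub1 h)))
        by_cases h3 : z = y
        · exact Or.inl (hfixE z (by rw [h3]; exact hynot1))
        by_cases h4' : z = π u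
        · exact Or.inl (hfixE z (by rw [h4']; exact fun h => hwnotB (hBsub1 h)))
        · exact Or.inr (cyc4_other h1 h2 h3 h4')
    · have hrw : (σE * cyc4 x u y (ρ u))⁻¹ * π = (cyc4 x u y (ρ u))⁻¹ * ρ := by
        rw [hρdef, mul_inv_rev, mul_assoc]
      rw [hrw]
      exact hsurg
  · by_cases hfix2 : ∃ u v : V, u ≠ v ∧ π u = u ∧ π v = v
    · -- case B : merge the leftover transposition with two fixed points
      obtain ⟨u, v, huv, hu, hv⟩ := hfix2
      obtain ⟨σE, hfixE, hTσE, hTμ'⟩ := lemE π1 (by omega)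
      have hfixE' : ∀ z, z ∉ Bset π1 → σE⁻¹ z = z := fun z h => inv_apply_eq (hfixE z h)
      set ρ := σE⁻¹ * π with hρdef
      set μ1 := σE⁻¹ * π1 with hμ1def
      have hρx : ρ x = y := by
        rw [hρdef]
        simp only [Equiv.Perm.mul_apply, ← hydef]
        exact hfixE' y hynot1
      have hρy : ρ y = x := by
        rw [hρdef]
        simp only [Equiv.Perm.mul_apply, hπy]
        exact hfixE' x hxnot1
      have hoff : ∀ w, w ≠ x → w ≠ y → ρ w = μ1 w := by
        intro w w1 w2
        rw [hρdef, hμ1def]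
        simp only [Equiv.Perm.mul_apply, hπ1def]
        rw [Equiv.swap_apply_of_ne_of_ne w1 w2]
      have hexc : ∀ z, z ≠ x → z ≠ y → ρ (ρ z) = z → ρ z = z := by
        intro z h1 h2 hzz
        rw [hoff z h1 h2] at hzz ⊢
        by_cases e1 : μ1 z = x
        · rw [e1, hρx] at hzz; exact absurd hzz.symm h2
        by_cases e2 : μ1 z = y
        · rw [e2, hρy] at hzz; exact absurd hzz.symm h1
        · rw [hoff (μ1 z) e1 e2] at hzz
          exact hTμ' z hzz
      have hunotB : u ∉ Bset π := fun h => (mem_Bset.mp h).1 hu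
      have hvnotB : v ∉ Bset π := fun h => (mem_Bset.mp h).1 hv
      have hρu : ρ u = u := by
        rw [hρdef]
        simp only [Equiv.Perm.mul_apply, hu]
        exact hfixE' u (fun h => hunotB (hBsub1 h))
      have hρv : ρ v = v := by
        rw [hρdef]
        simp only [Equiv.Perm.mul_apply, hv]
        exact hfixE' v (fun h => hvnotB (hBsub1 h))
      have hsurg : TCF ((cyc4 x u v y)⁻¹ * ρ) :=
        surgeryFix ρ x y u v hρx hρy hxy hρu hρv huv hexc
      have hux : u ≠ x := by rintro rfl; exact hxy (by rw [hydef, hu])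
      have huy : u ≠ y := by rintro rfl; exact hxy (by rw [← hπy, hu])
      have hvx : v ≠ x := by rintro rfl; exact hxy (by rw [hydef, hv])
      have hvy : v ≠ y := by rintro rfl; exact hxy (by rw [← hπy, hv])
      refine ⟨σE * cyc4 x u v y, ?_, ?_⟩
      · apply tcf_mul_of_disjoint _ hTσE
        · exact tcf_cyc4 hux.symm hvx.symm hxy huv huy hvy
        · intro z
          by_cases h1 : z = x
          · exact Or.inl (hfixE z (by rw [h1]; exact hxnot1))
          by_cases h2 : z = u
          · exact Or.inl (hfixE z (by rw [h2]; exact fun h => hunotB (hBsub1 h)))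
          by_cases h3 : z = v
          · exact Or.inl (hfixE z (by rw [h3]; exact fun h => hvnotB (hBsub1 h)))
          by_cases h4' : z = y
          · exact Or.inl (hfixE z (by rw [h4']; exact hynot1))
          · exact Or.inr (cyc4_other h1 h2 h3 h4')
      · have hrw : (σE * cyc4 x u v y)⁻¹ * π = (cyc4 x u v y)⁻¹ * ρ := by
          rw [hρdef, mul_inv_rev, mul_assoc]
        rw [hrw]
        exact hsurg
    · -- case C : at least three transpositions; merge three of them
      have hallB : ∀ z, π z ≠ z → z ∈ Bset π := by
        intro z hz
        push_neg at hcyc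
        exact mem_Bset.mpr ⟨hz, hcyc z hz⟩
      have hcompl : ((Bset π)ᶜ).card ≤ 1 := by
        by_contra h
        push_neg at h
        obtain ⟨a, ha, b, hb, hab⟩ := Finset.one_lt_card.mp h
        refine hfix2 ⟨a, b, hab, ?_, ?_⟩
        · by_contra hpa; exact (Finset.mem_compl.mp ha) (hallB a hpa)
        · by_contra hpb; exact (Finset.mem_compl.mp hb) (hallB b hpb)
      have hcardcompl : ((Bset π)ᶜ).card = Fintype.card V - (Bset π).card :=
        Finset.card_compl _
      have hle : (Bset π).card ≤ Fintype.card V := Finset.card_le_univ _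
      have hcardB : 6 ≤ (Bset π).card := by omega
      -- second transposition
      obtain ⟨x2, hx2mem1⟩ : (Bset π1).Nonempty := by
        rw [← Finset.card_pos, hcard1]; omega
      have hx2' : x2 ∈ Bset π ∧ x2 ≠ x ∧ x2 ≠ y := by
        have := hx2mem1
        rw [hB1, Finset.mem_sdiff, Finset.mem_insert, Finset.mem_singleton] at this
        exact ⟨this.1, fun h => this.2 (Or.inl h), fun h => this.2 (Or.inr h)⟩
      obtain ⟨hx2mem, hx2x, hx2y⟩ := hx2'
      obtain ⟨hπx2, hπ2x2⟩ := mem_Bset.mp hx2mem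
      set y2 := π x2 with hy2def
      have hπy2 : π y2 = x2 := hπ2x2
      have hx2y2 : x2 ≠ y2 := fun h => hπx2 h.symm
      have hy2mem : y2 ∈ Bset π := apply_mem_Bset hx2mem
      have hy2x : y2 ≠ x := fun h => hx2y (π.injective (by rw [← hy2def, hπy]; exact h))
      have hy2y : y2 ≠ y := fun h => hx2x (π.injective (by rw [← hy2def, ← hydef]; exact h))
      set π2 := π1 * Equiv.swap x2 y2 with hπ2def
      have hπ1x2 : π1 x2 = y2 := by
        rw [hπ1def]
        simp only [Equiv.Perm.mul_apply]
        rw [Equiv.swap_apply_of_ne_of_ne hx2x hx2y]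
      have hB2' : Bset π2 = Bset π1 \ {x2, y2} := by
        have := Bset_swap π1 x2 hx2mem1
        rwa [hπ1x2] at this
      have hsub2 : ({x2, y2} : Finset V) ⊆ Bset π1 := by
        intro z hz
        rcases Finset.mem_insert.mp hz with rfl | hz
        · exact hx2mem1
        · rw [Finset.mem_singleton.mp hz]
          have := apply_mem_Bset hx2mem1
          rwa [hπ1x2] at this
      have hcard2 : (Bset π2).card = (Bset π).card - 4 := by
        rw [hB2', Finset.card_sdiff_of_subset hsub2, Finset.card_pair hx2y2, hcard1]
        omega
      -- third transposition
      obtain ⟨x3, hx3mem2⟩ : (Bset π2).Nonempty := by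
        rw [← Finset.card_pos, hcard2]; omega
      have hx3' : x3 ∈ Bset π ∧ x3 ≠ x ∧ x3 ≠ y ∧ x3 ≠ x2 ∧ x3 ≠ y2 := by
        have h0 := hx3mem2
        rw [hB2', hB1] at h0
        simp only [Finset.mem_sdiff, Finset.mem_insert, Finset.mem_singleton] at h0
        obtain ⟨⟨hm, ha⟩, hb⟩ := h0
        push_neg at ha hb
        exact ⟨hm, ha.1, ha.2, hb.1, hb.2⟩
      obtain ⟨hx3mem, hx3x, hx3y, hx3x2, hx3y2⟩ := hx3'
      obtain ⟨hπx3, hπ2x3⟩ := mem_Bset.mp hx3mem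
      set y3 := π x3 with hy3def
      have hπy3 : π y3 = x3 := hπ2x3
      have hx3y3 : x3 ≠ y3 := fun h => hπx3 h.symm
      have hy3mem : y3 ∈ Bset π := apply_mem_Bset hx3mem
      have hy3x : y3 ≠ x := fun h => hx3y (π.injective (by rw [← hy3def, hπy]; exact h))
      have hy3y : y3 ≠ y := fun h => hx3x (π.injective (by rw [← hy3def, ← hydef]; exact h))
      have hy3x2 : y3 ≠ x2 := fun h => hx3y2 (π.injective (by rw [← hy3def, hπy2]; exact h))
      have hy3y2 : y3 ≠ y2 := fun h => hx3x2 (π.injective (by rw [← hy3def, ← hy2def]; exact h))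
      set π3 := π2 * Equiv.swap x3 y3 with hπ3def
      have hπ2x3' : π2 x3 = y3 := by
        rw [hπ2def, hπ1def]
        simp only [Equiv.Perm.mul_apply]
        rw [Equiv.swap_apply_of_ne_of_ne hx3x2 hx3y2, Equiv.swap_apply_of_ne_of_ne hx3x hx3y]
      have hB3 : Bset π3 = Bset π2 \ {x3, y3} := by
        have := Bset_swap π2 x3 hx3mem2
        rwa [hπ2x3'] at this
      have hsub3 : ({x3, y3} : Finset V) ⊆ Bset π2 := by
        intro z hz
        rcases Finset.mem_insert.mp hz with rfl | hz
        · exact hx3mem2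
        · rw [Finset.mem_singleton.mp hz]
          have := apply_mem_Bset hx3mem2
          rwa [hπ2x3'] at this
      have hcard3 : (Bset π3).card = (Bset π).card - 6 := by
        rw [hB3, Finset.card_sdiff_of_subset hsub3, Finset.card_pair hx3y3, hcard2]
        omega
      obtain ⟨σE, hfixE, hTσE, hTμ'⟩ := lemE π3 (by omega)
      have hfixE' : ∀ z, z ∉ Bset π3 → σE⁻¹ z = z := fun z h => inv_apply_eq (hfixE z h)
      have hnot6 : ∀ z, z = x ∨ z = y ∨ z = x2 ∨ z = y2 ∨ z = x3 ∨ z = y3 →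
          z ∉ Bset π3 := by
        intro z hz hmem
        rw [hB3, hB2', hB1] at hmem
        simp only [Finset.mem_sdiff, Finset.mem_insert, Finset.mem_singleton] at hmem
        obtain ⟨⟨⟨_, a⟩, b⟩, c⟩ := hmem
        rcases hz with rfl | rfl | rfl | rfl | rfl | rfl
        · exact a (Or.inl rfl)
        · exact a (Or.inr rfl)
        · exact b (Or.inl rfl)
        · exact b (Or.inr rfl)
        · exact c (Or.inl rfl)
        · exact c (Or.inr rfl)
      set ρ := σE⁻¹ * π with hρdef
      set μ3 := σE⁻¹ * π3 with hμ3def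
      have hρ6 : ∀ p q : V, π p = q →
          (q = x ∨ q = y ∨ q = x2 ∨ q = y2 ∨ q = x3 ∨ q = y3) → ρ p = q := by
        intro p q hpq hq
        rw [hρdef]
        simp only [Equiv.Perm.mul_apply, hpq]
        exact hfixE' q (hnot6 q hq)
      have r1 : ρ x = y := hρ6 x y hydef.symm (Or.inr (Or.inl rfl))
      have r1' : ρ y = x := hρ6 y x hπy (Or.inl rfl)
      have r2 : ρ x2 = y2 := hρ6 x2 y2 hy2def.symm (Or.inr (Or.inr (Or.inr (Or.inl rfl))))
      have r2' : ρ y2 = x2 := hρ6 y2 x2 hπy2 (Or.inr (Or.inr (Or.inl rfl)))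
      have r3 : ρ x3 = y3 := hρ6 x3 y3 hy3def.symm
        (Or.inr (Or.inr (Or.inr (Or.inr (Or.inr rfl)))))
      have r3' : ρ y3 = x3 := hρ6 y3 x3 hπy3 (Or.inr (Or.inr (Or.inr (Or.inr (Or.inl rfl)))))
      have hoff : ∀ w, w ≠ x → w ≠ y → w ≠ x2 → w ≠ y2 → w ≠ x3 → w ≠ y3 →
          ρ w = μ3 w := by
        intro w w1 w2 w3 w4 w5 w6
        rw [hρdef, hμ3def]
        simp only [Equiv.Perm.mul_apply, hπ3def, hπ2def, hπ1def]
        rw [Equiv.swap_apply_of_ne_of_ne w5 w6, Equiv.swap_apply_of_ne_of_ne w3 w4,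
          Equiv.swap_apply_of_ne_of_ne w1 w2]
      have hexc6 : ∀ z, z ≠ x → z ≠ y → z ≠ x2 → z ≠ y2 → z ≠ x3 → z ≠ y3 →
          ρ (ρ z) = z → ρ z = z := by
        intro z z1 z2 z3 z4 z5 z6 hzz
        rw [hoff z z1 z2 z3 z4 z5 z6] at hzz ⊢
        by_cases e1 : μ3 z = x
        · rw [e1, r1] at hzz; exact absurd hzz.symm z2
        by_cases e2 : μ3 z = y
        · rw [e2, r1'] at hzz; exact absurd hzz.symm z1
        by_cases e3 : μ3 z = x2
        · rw [e3, r2] at hzz; exact absurd hzz.symm z4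
        by_cases e4 : μ3 z = y2
        · rw [e4, r2'] at hzz; exact absurd hzz.symm z3
        by_cases e5 : μ3 z = x3
        · rw [e5, r3] at hzz; exact absurd hzz.symm z6
        by_cases e6 : μ3 z = y3
        · rw [e6, r3'] at hzz; exact absurd hzz.symm z5
        · rw [hoff (μ3 z) e1 e2 e3 e4 e5 e6] at hzz
          exact hTμ' z hzz
      have hsurg : TCF ((cyc6 x x2 x3 y y2 y3)⁻¹ * ρ) :=
        surgery6 ρ x x2 x3 y y2 y3 r1 r1' r2 r2' r3 r3'
          hx2x.symm hx3x.symm hxy hy2x.symm hy3x.symm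
          hx3x2.symm hx2y hx2y2 hy3x2.symm
          hx3y hx3y2 hx3y3
          hy2y.symm hy3y.symm hy3y2.symm
          hexc6
      refine ⟨σE * cyc6 x x2 x3 y y2 y3, ?_, ?_⟩
      · apply tcf_mul_of_disjoint _ hTσE
        · exact tcf_cyc6 hx2x.symm hx3x.symm hxy hy2x.symm hy3x.symm
            hx3x2.symm hx2y hx2y2 hy3x2.symm hx3y hx3y2 hx3y3
            hy2y.symm hy3y.symm hy3y2.symm
        · intro z
          by_cases h1 : z = x
          · exact Or.inl (hfixE z (hnot6 z (Or.inl h1)))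
          by_cases h2 : z = x2
          · exact Or.inl (hfixE z (hnot6 z (Or.inr (Or.inr (Or.inl h2)))))
          by_cases h3 : z = x3
          · exact Or.inl (hfixE z (hnot6 z (Or.inr (Or.inr (Or.inr (Or.inr (Or.inl h3)))))))
          by_cases h4' : z = y
          · exact Or.inl (hfixE z (hnot6 z (Or.inr (Or.inl h4'))))
          by_cases h5 : z = y2
          · exact Or.inl (hfixE z (hnot6 z (Or.inr (Or.inr (Or.inr (Or.inl h5))))))
          by_cases h6 : z = y3
          · exact Or.inl (hfixE z (hnot6 z (Or.inr (Or.inr (Or.inr (Or.inr (Or.inr h6)))))))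
          · exact Or.inr (cyc6_other h1 h2 h3 h4' h5 h6)
      · have hrw : (σE * cyc6 x x2 x3 y y2 y3)⁻¹ * π = (cyc6 x x2 x3 y y2 y3)⁻¹ * ρ := by
          rw [hρdef, mul_inv_rev, mul_assoc]
        rw [hrw]
        exact hsurg

end CliqueTwoStep

open CliqueTwoStep in
/-- Any permutation placement problem on a complete graph with at least 4 vertices
admits a feasible swap-free intermediate placement: there is an injective s' with no
swap between s and s' and no swap between s' and t. -/
theorem clique_two_step_schedule
    (A V : Type*) [Fintype A] [Fintype V]
    (hV : 4 ≤ Fintype.card V)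
    (s t : A → V) (hs : Function.Injective s) (ht : Function.Injective t) :
    ∃ s' : A → V, Function.Injective s' ∧
      (∀ a b : A, a ≠ b → ¬(s' a = s b ∧ s' b = s a)) ∧
      (∀ a b : A, a ≠ b → ¬(t a = s' b ∧ t b = s' a)) := by
  classical
  obtain ⟨π, hπ⟩ : ∃ π : Equiv.Perm V, ∀ a, π (s a) = t a := by
    have hcardst : Fintype.card (Set.range s) = Fintype.card (Set.range t) := by
      rw [Set.card_range_of_injective hs, Set.card_range_of_injective ht]
    have hc : Fintype.card (↥(Set.range s)ᶜ) = Fintype.card (↥(Set.range t)ᶜ) := by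
      rw [Fintype.card_compl_set, Fintype.card_compl_set, hcardst]
    let e : (Set.range s) ≃ (Set.range t) :=
      (Equiv.ofInjective s hs).symm.trans (Equiv.ofInjective t ht)
    let e' : ↥(Set.range s)ᶜ ≃ ↥(Set.range t)ᶜ := Fintype.equivOfCardEq hc
    refine ⟨(Equiv.Set.sumCompl (Set.range s)).symm.trans
      ((e.sumCongr e').trans (Equiv.Set.sumCompl (Set.range t))), fun a => ?_⟩
    have hmem : s a ∈ Set.range s := ⟨a, rfl⟩
    simp only [Equiv.trans_apply]
    rw [Equiv.Set.sumCompl_symm_apply_of_mem hmem]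
    have h1 : (e.sumCongr e') (Sum.inl ⟨s a, hmem⟩) = Sum.inl (e ⟨s a, hmem⟩) := rfl
    rw [h1]
    have h2 : e ⟨s a, hmem⟩ = ⟨t a, ⟨a, rfl⟩⟩ := by
      simp only [e, Equiv.trans_apply]
      have : (⟨s a, hmem⟩ : Set.range s) = Equiv.ofInjective s hs a := rfl
      rw [this, Equiv.symm_apply_apply]
      rfl
    rw [h2, Equiv.Set.sumCompl_apply_inl]
  obtain ⟨σ, hTσ, hTμ⟩ := CliqueTwoStep.key_perm hV π
  refine ⟨fun a => σ (s a), fun a b h => hs (σ.injective h), ?_, ?_⟩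
  · rintro a b hab ⟨h1, h2⟩
    have h1' : σ (s a) = s b := h1
    have h2' : σ (s b) = s a := h2
    have hfix : σ (s a) = s a := hTσ (s a) (by rw [h1', h2'])
    exact hab (hs (hfix.symm.trans h1'))
  · rintro a b hab ⟨h1, h2⟩
    have h1' : t a = σ (s b) := h1
    have h2' : t b = σ (s a) := h2
    have ha : (σ⁻¹ * π) (s a) = s b := by
      simp only [Equiv.Perm.mul_apply, hπ a, h1', Equiv.Perm.coe_inv, Equiv.symm_apply_apply]
    have hb : (σ⁻¹ * π) (s b) = s a := by
      simp only [Equiv.Perm.mul_apply, hπ b, h2', Equiv.Perm.coe_inv, Equiv.symm_apply_apply]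
    have hfix : (σ⁻¹ * π) (s a) = s a := hTμ (s a) (by rw [ha, hb])
    exact hab (hs (hfix.symm.trans ha))
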